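/- Base change for coproduct induction: given a pullback square of finite G-sets with D = A ×_Y B, r' : D → A, t' : D → B the projections, and t : A → Y, r : B → Y the given maps, there is a natural isomorphism of functors r^* ∘ t^∨_* ≅ (t')^∨_* ∘ (r')^* from Fun(B_G A, C) to Fun(B_G B, C), for any category C with finite coproducts. -/

import Mathlib

open CategoryTheory

/-- The translation category `B_G(X)` of a `G`-set `X`: objects are elements of `X`,
and for each `g : G` there is a morphism `g : x → g • x`. -/
abbrev Translation (G : Type) [Group G] (X : Type) [MulAction G X] : Type := X

instance Translation.category (G : Type) [Group G] (X : Type) [MulAction G X] :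
    Category (Translation G X) where
  Hom x y := {g : G // g • x = y}
  id x := ⟨1, one_smul G x⟩
  comp f g := ⟨g.1 * f.1, by rw [mul_smul, f.2, g.2]⟩
  id_comp f := Subtype.ext (mul_one _)
  comp_id f := Subtype.ext (one_mul _)
  assoc f g h := Subtype.ext (mul_assoc _ _ _).symm

/-- The functor `B_G(X) → B_G(Y)` induced by a `G`-equivariant map, sending `x` to
`f(x)` and the morphism `g : x → g•x` to `g : f(x) → g•f(x)`. -/
def translationMap {G : Type} [Group G] {X Y : Type} [MulAction G X] [MulAction G Y]
    (f : X → Y) (hf : ∀ (g : G) (x : X), f (g • x) = g • f x) :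
    Translation G X ⥤ Translation G Y where
  obj x := f x
  map {x y} m := ⟨m.1, (hf m.1 x).symm.trans (congrArg f m.2)⟩
  map_id _ := rfl
  map_comp _ _ := rfl

universe v u

namespace BCaux

open Limits

instance (priority := 5000) fixInst {C : Type u} [Category.{v} C] [HasCoproducts.{0} C]
    {ι : Type} (fam : ι → C) : HasColimit (Discrete.functor fam) :=
  HasColimitsOfShape.has_colimit _

lemma comp_ι_congr {C : Type u} [Category.{v} C] [HasCoproducts.{0} C]
    {ι : Type} (fam : ι → C) {c : C} {i j : ι} (h : i = j)
    (u : c ⟶ fam i) (v : c ⟶ fam j) (huv : u = v ≫ eqToHom (by rw [h])) :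
    u ≫ Sigma.ι fam i = v ≫ Sigma.ι fam j := by subst h; simp [huv]

variable {G : Type} [Group G]
variable {C : Type u} [Category.{v} C] [HasCoproducts.{0} C]
variable {X Z : Type} [MulAction G X] [MulAction G Z]

omit [HasCoproducts.{0} C] in
lemma tmap_eq (F : Translation G X ⥤ C) {x x1 x2 : Translation G X} (g : G)
    (h1 : g • x = x1) (h2 : g • x = x2) :
    F.map (⟨g, h1⟩ : x ⟶ x1) = F.map (⟨g, h2⟩ : x ⟶ x2) ≫ eqToHom (by rw [← h2, h1]) := by
  subst h1; subst h2; simp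

omit [HasCoproducts.{0} C] in
lemma tmap_eqToHom (F : Translation G X ⥤ C) {x x1 : Translation G X} (g : G)
    (hg : g = 1) (h : g • x = x1) :
    F.map (⟨g, h⟩ : x ⟶ x1) = eqToHom (by rw [← h, hg, one_smul]) := by
  subst hg
  have hx : x = x1 := by rw [← h, one_smul]
  subst hx
  have : (⟨1, h⟩ : x ⟶ x) = 𝟙 x := Subtype.ext rfl
  rw [this, F.map_id, eqToHom_refl]

variable (f : X → Z) (hf : ∀ (g : G) (x : X), f (g • x) = g • f x)

noncomputable def coindObj (F : Translation G X ⥤ C) : Translation G Z ⥤ C where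
  obj z := ∐ fun x : {x : X // f x = z} => F.obj x.1
  map {z z'} m := Sigma.desc fun x =>
    F.map (⟨m.1, rfl⟩ : (x.1 : Translation G X) ⟶ (m.1 • x.1 : X)) ≫
      Sigma.ι (fun x' : {x : X // f x = z'} => F.obj x'.1) ⟨m.1 • x.1, by rw [hf, x.2, m.2]⟩
  map_id z := by
    ext x
    simp only [colimit.ι_desc, Cofan.mk_pt, Cofan.mk_ι_app, Category.comp_id]
    rw [← Category.id_comp (Sigma.ι (fun x' : {x : X // f x = z} => F.obj x'.1) x)]
    refine comp_ι_congr (fun x' : {x : X // f x = z} => F.obj x'.1)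
      (i := ⟨(𝟙 z : z ⟶ z).1 • x.1, by rw [hf, x.2]; exact (𝟙 z : z ⟶ z).2⟩) (j := x)
      (Subtype.ext (one_smul G x.1)) _ _ ?_
    rw [Category.id_comp]
    exact tmap_eqToHom F _ rfl _
  map_comp {z1 z2 z3} m1 m2 := by
    ext x
    simp only [colimit.ι_desc, Cofan.mk_pt, Cofan.mk_ι_app, colimit.ι_desc_assoc, Category.assoc]
    conv_rhs => rw [← Category.assoc, ← F.map_comp]
    refine comp_ι_congr (fun x' : {x : X // f x = z3} => F.obj x'.1)
      (i := ⟨(m1 ≫ m2 : z1 ⟶ z3).1 • x.1, by rw [hf, x.2]; exact (m1 ≫ m2 : z1 ⟶ z3).2⟩)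
      (j := ⟨m2.1 • m1.1 • x.1, by rw [hf, hf, x.2, m1.2]; exact m2.2⟩)
      (Subtype.ext (mul_smul m2.1 m1.1 x.1)) _ _ ?_
    exact tmap_eq F (m2.1 * m1.1) rfl _

noncomputable def coind : (Translation G X ⥤ C) ⥤ (Translation G Z ⥤ C) where
  obj F := coindObj f hf F
  map {F F'} α :=
    { app := fun z => Sigma.desc fun x =>
        α.app x.1 ≫ Sigma.ι (fun x' : {x : X // f x = z} => F'.obj x'.1) x
      naturality := by
        intro z z' m
        dsimp only [coindObj]
        ext x
        simp only [colimit.ι_desc_assoc, Cofan.mk_pt, Cofan.mk_ι_app,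
          colimit.ι_desc, Category.assoc]
        rw [← Category.assoc, α.naturality, Category.assoc] }
  map_id F := by
    ext z : 2
    apply colimit.hom_ext
    rintro ⟨x⟩
    simp [coindObj]
  map_comp α β := by
    ext z : 2
    apply colimit.hom_ext
    rintro ⟨x⟩
    simp [coindObj]

omit [HasCoproducts.{0} C] in
lemma tmap_conj (H : Translation G Z ⥤ C) {z1 z2 w1 w2 : Translation G Z} (g : G)
    (h1 : g • z1 = z2) (h2 : g • w1 = w2) (e1 : z1 = w1) (e2 : z2 = w2) :
    H.map (⟨g, h1⟩ : z1 ⟶ z2) ≫ eqToHom (by rw [e2]) =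
      eqToHom (by rw [e1]) ≫ H.map (⟨g, h2⟩ : w1 ⟶ w2) := by
  subst e1; subst e2; simp

noncomputable def coindAdj :
    coind (C := C) f hf ⊣ (Functor.whiskeringLeft (Translation G X) (Translation G Z) C).obj
      (translationMap f hf) :=
  Adjunction.mkOfHomEquiv
    { homEquiv := fun F H =>
        { toFun := fun η =>
            { app := fun x =>
                Sigma.ι (fun x' : {x' : X // f x' = f x} => F.obj x'.1) ⟨x, rfl⟩ ≫ η.app (f x)
              naturality := by
                intro x x' m
                obtain ⟨g, hg⟩ := m
                subst hg
                have hdesc : Sigma.ι (fun x' : {x' : X // f x' = f x} => F.obj x'.1) ⟨x, rfl⟩ ≫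
                    (coindObj f hf F).map (⟨g, (hf g x).symm⟩ : (f x : Translation G Z) ⟶ f (g • x)) =
                    F.map (⟨g, rfl⟩ : (x : Translation G X) ⟶ g • x) ≫
                      Sigma.ι (fun x' : {x' : X // f x' = f (g • x)} => F.obj x'.1) ⟨g • x, rfl⟩ := by
                  dsimp only [coindObj]
                  rw [colimit.ι_desc]
                  rfl
                have hnat := η.naturality
                  (⟨g, (hf g x).symm⟩ : (f x : Translation G Z) ⟶ f (g • x))
                dsimp only [coind] at hnat
                erw [← Category.assoc, ← hdesc, Category.assoc, hnat, ← Category.assoc]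
                rfl }
          invFun := fun α =>
            { app := fun z => Sigma.desc fun x => α.app x.1 ≫ eqToHom (congrArg H.obj x.2)
              naturality := by
                intro z z' m
                obtain ⟨g, hg⟩ := m
                dsimp only [coind, coindObj]
                ext x
                simp only [colimit.ι_desc_assoc, Cofan.mk_pt, Cofan.mk_ι_app,
                  colimit.ι_desc, Category.assoc]
                have hnat := α.naturality (⟨g, rfl⟩ : (x.1 : Translation G X) ⟶ g • x.1)
                dsimp only [Functor.whiskeringLeft, translationMap, Functor.comp_map] at hnat
                erw [← Category.assoc, hnat, Category.assoc]
                congr 1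
                exact tmap_conj H g _ hg x.2 (by rw [hf, x.2]; exact hg) }
          left_inv := by
            intro η
            ext z
            apply colimit.hom_ext
            rintro ⟨x⟩
            obtain ⟨x, hx⟩ := x
            subst hx
            simp [coindObj]
            exact Category.comp_id _
          right_inv := by
            intro α
            ext x
            exact (colimit.ι_desc _ _).trans (Category.comp_id _) }
      homEquiv_naturality_left_symm := by
        intro F F' H β α
        ext z
        apply colimit.hom_ext
        rintro ⟨x⟩
        erw [colimit.ι_desc, colimit.ι_desc_assoc]
        simp
        exact ((Category.assoc _ _ _).trans (congrArg (β.app x.1 ≫ ·) (Sigma.ι_desc (fun x : {x' : X // f x' = z} => α.app x.1 ≫ eqToHom (congrArg H.obj x.2)) x))).symm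
      homEquiv_naturality_right := by
        intro F H H' η β
        ext x
        simp
        exact (Category.assoc _ _ _).symm }

end BCaux


variable {G : Type} [Group G] {A B Y : Type} [MulAction G A] [MulAction G B] [MulAction G Y]

/-- The pullback `A ×_Y B` of `G`-sets along equivariant maps, with the diagonal action. -/
def GPullback (t : A →[G] Y) (r : B →[G] Y) : Type := {p : A × B // t p.1 = r p.2}

instance GPullback.mulAction (t : A →[G] Y) (r : B →[G] Y) :
    MulAction G (GPullback t r) where
  smul g p := ⟨(g • p.1.1, g • p.1.2), by
    show t (g • p.1.1) = r (g • p.1.2); rw [map_smul, map_smul, p.2]⟩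
  one_smul p := Subtype.ext (Prod.ext (one_smul G _) (one_smul G _))
  mul_smul g₁ g₂ p := Subtype.ext (Prod.ext (mul_smul g₁ g₂ _) (mul_smul g₁ g₂ _))

namespace BCaux

open Limits

variable {C : Type u} [Category.{v} C] [HasCoproducts.{0} C]
variable (t : A →[G] Y) (r : B →[G] Y)

noncomputable def bcIso :
    coind (C := C) (⇑t) (map_smul t) ⋙
      (Functor.whiskeringLeft (Translation G B) (Translation G Y) C).obj
        (translationMap r (map_smul r)) ≅
    (Functor.whiskeringLeft (Translation G (GPullback t r)) (Translation G A) C).obj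
        (translationMap (fun p : GPullback t r => (Prod.fst (Subtype.val p))) (fun _ _ => rfl)) ⋙
      coind (C := C) (fun p : GPullback t r => (Prod.snd (Subtype.val p))) (fun _ _ => rfl) :=
  NatIso.ofComponents (fun F =>
    NatIso.ofComponents (fun b =>
      { hom := Sigma.desc fun a : {a : A // t a = r b} =>
          Sigma.ι (fun p : {p : GPullback t r // Prod.snd (Subtype.val p) = b} =>
              F.obj (Prod.fst (Subtype.val (Subtype.val p))))
            ⟨⟨(a.1, b), a.2⟩, rfl⟩
        inv := Sigma.desc fun p : {p : GPullback t r // Prod.snd (Subtype.val p) = b} =>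
          Sigma.ι (fun a : {a : A // t a = r b} => F.obj a.1)
            ⟨Prod.fst (Subtype.val (Subtype.val p)),
              (Subtype.prop (Subtype.val p)).trans (congrArg r (Subtype.prop p))⟩
        hom_inv_id := by
          dsimp only [coind, coindObj, Functor.whiskeringLeft, translationMap, Functor.comp_obj,
            Functor.comp_map]
          apply colimit.hom_ext
          rintro ⟨a⟩
          simp
        inv_hom_id := by
          dsimp only [coind, coindObj, Functor.whiskeringLeft, translationMap, Functor.comp_obj,
            Functor.comp_map]
          apply colimit.hom_ext
          rintro ⟨p⟩
          simp
          congr 1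
          exact Subtype.ext (Subtype.ext (Prod.ext rfl (Subtype.prop p).symm)) })
      (by
        intro b b' m
        obtain ⟨g, hg⟩ := m
        dsimp only [coind, coindObj, Functor.whiskeringLeft, translationMap, Functor.comp_obj,
          Functor.comp_map]
        apply colimit.hom_ext
        rintro ⟨a⟩
        simp only [colimit.ι_desc_assoc, Cofan.mk_pt, Cofan.mk_ι_app, colimit.ι_desc,
          Category.assoc]
        refine comp_ι_congr
          (fun p : {x : GPullback t r // Prod.snd (Subtype.val x) = b'} =>
            F.obj (Prod.fst (Subtype.val (Subtype.val p))))
          (i := ⟨⟨(g • a.1, b'), by rw [map_smul t, a.2, ← map_smul r, hg]⟩, rfl⟩)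
          (j := ⟨g • (show GPullback t r from ⟨(a.1, b), a.2⟩), hg⟩)
          (Subtype.ext (Subtype.ext (Prod.ext rfl hg.symm))) _ _ ?_
        exact tmap_eq F g rfl rfl))
    (by
      intro F F' β
      ext b : 2
      dsimp only [coind, coindObj, Functor.whiskeringLeft, translationMap, Functor.comp_obj,
        Functor.comp_map]
      apply colimit.hom_ext
      rintro ⟨a⟩
      simp
      dsimp only [NatIso.ofComponents]
      simp)

end BCaux

/-- base change for coproduct induction.  Given a pullback square of
finite `G`-sets `D = A ×_Y B` with projections `r' : D → A`, `t' : D → B` and maps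
`t : A → Y`, `r : B → Y`, and a category `C` with coproducts, the coproduct-induction
functors (characterized as left adjoints of the precomposition functors) satisfy
`r^* ∘ t^∨_* ≅ (t')^∨_* ∘ (r')^*` as functors `Fun(B_G A, C) → Fun(B_G B, C)`. -/
theorem base_change_coproduct [Fintype G] [Fintype A] [Fintype B] [Fintype Y]
    (C : Type u) [Category.{v} C] [Limits.HasCoproducts.{0} C]
    (t : A →[G] Y) (r : B →[G] Y)
    (Lt : (Translation G A ⥤ C) ⥤ (Translation G Y ⥤ C))
    (adjt : Lt ⊣ (Functor.whiskeringLeft (Translation G A) (Translation G Y) C).obj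
      (translationMap t (map_smul t)))
    (Lt' : (Translation G (GPullback t r) ⥤ C) ⥤ (Translation G B ⥤ C))
    (adjt' : Lt' ⊣ (Functor.whiskeringLeft (Translation G (GPullback t r)) (Translation G B) C).obj
        (translationMap (fun p : GPullback t r => (Prod.snd (Subtype.val p))) (fun _ _ => rfl))) :
    Nonempty (Lt ⋙ (Functor.whiskeringLeft (Translation G B) (Translation G Y) C).obj
        (translationMap r (map_smul r)) ≅
      (Functor.whiskeringLeft (Translation G (GPullback t r)) (Translation G A) C).obj
        (translationMap (fun p : GPullback t r => (Prod.fst (Subtype.val p))) (fun _ _ => rfl)) ⋙ Lt') := by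
  refine ⟨?_⟩
  exact (Functor.isoWhiskerRight (adjt.leftAdjointUniq (BCaux.coindAdj (⇑t) (map_smul t)))
      ((Functor.whiskeringLeft (Translation G B) (Translation G Y) C).obj
        (translationMap r (map_smul r)))) ≪≫
    BCaux.bcIso t r ≪≫
    Functor.isoWhiskerLeft _
      ((BCaux.coindAdj (fun p : GPullback t r => (Prod.snd (Subtype.val p)))
        (fun _ _ => rfl)).leftAdjointUniq adjt')
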